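/- Let g_1, …, g_r ∈ k[x] (r ≥ 0) and w ∈ Γ^n. If g_1^w, …, g_r^w are algebraically independent over k, then the initial algebra of k[g_1,…,g_r] for w equals k[g_1^w,…,g_r^w], i.e., k[g_1,…,g_r]^w = k[g_1^w,…,g_r^w]. -/

import Mathlib

open MvPolynomial Polynomial

set_option synthInstance.maxHeartbeats 1000000
set_option maxHeartbeats 1000000

variable {k : Type*} [Field k] [CharZero k] {n : ℕ}
variable {Γ : Type*} [AddCommGroup Γ] [LinearOrder Γ] [IsOrderedAddMonoid Γ]

/-- The `w`-degree of a multivariate polynomial, with `wdeg w 0 = ⊥ = -∞`. -/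
noncomputable def wdeg (w : Fin n → Γ) (f : MvPolynomial (Fin n) k) : WithBot Γ :=
  f.support.sup fun d => ((∑ i, d i • w i : Γ) : WithBot Γ)

/-- The leading `w`-homogeneous form `f^w` of `f`. -/
noncomputable def lform (w : Fin n → Γ) (f : MvPolynomial (Fin n) k) :
    MvPolynomial (Fin n) k :=
  letI : DecidableEq (WithBot Γ) := Classical.decEq _
  ∑ d ∈ f.support.filter
      (fun d => ((∑ i, d i • w i : Γ) : WithBot Γ) = wdeg w f),
    MvPolynomial.monomial d (f.coeff d)

/-- `deg_w^g Φ = max_i deg_w (φ_i g^i)` for `Φ = Σ_i φ_i y^i`. -/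
noncomputable def wdegG (w : Fin n → Γ) (g : MvPolynomial (Fin n) k)
    (Φ : Polynomial (MvPolynomial (Fin n) k)) : WithBot Γ :=
  Φ.support.sup fun i => wdeg w (Φ.coeff i * g ^ i)

/-- The leading form `Φ^{w,g}` of `Φ` for the grading in which `x_j` has weight `w_j`
and `y` has weight `deg_w g`: the sum of `φ_i^w y^i` over those `i` with
`deg_w (φ_i g^i) = deg_w^g Φ`. -/
noncomputable def pLform (w : Fin n → Γ) (g : MvPolynomial (Fin n) k)
    (Φ : Polynomial (MvPolynomial (Fin n) k)) : Polynomial (MvPolynomial (Fin n) k) :=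
  letI : DecidableEq (WithBot Γ) := Classical.decEq _
  ∑ i ∈ Φ.support.filter (fun i => wdeg w (Φ.coeff i * g ^ i) = wdegG w g Φ),
    Polynomial.C (lform w (Φ.coeff i)) * Polynomial.X ^ i

/-- `m_w^g(Φ) = min { i : deg_w^g (∂_y^i Φ) = deg_w ((∂_y^i Φ)(g)) }`. -/
noncomputable def mwg (w : Fin n → Γ) (g : MvPolynomial (Fin n) k)
    (Φ : Polynomial (MvPolynomial (Fin n) k)) : ℕ :=
  sInf {i : ℕ |
    wdegG w g (Polynomial.derivative^[i] Φ) = wdeg w ((Polynomial.derivative^[i] Φ).eval g)}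

/-- The `w`-degree of the differential form `dh_1 ∧ ⋯ ∧ dh_s`: the maximum over all
`s`-tuples of indices of the `w`-degree of the corresponding `s × s` Jacobian minor
plus the sum of the corresponding weights (noninjective tuples contribute `⊥`). -/
noncomputable def wedgeDeg (w : Fin n → Γ) {s : ℕ} (h : Fin s → MvPolynomial (Fin n) k) :
    WithBot Γ :=
  Finset.univ.sup fun e : Fin s → Fin n =>
    wdeg w (Matrix.det (Matrix.of fun a b : Fin s => MvPolynomial.pderiv (e b) (h a)))
      + ((∑ b, w (e b) : Γ) : WithBot Γ)

/-- The initial algebra `A^w`: the `k`-subalgebra generated by `f^w` for `f ∈ A \ {0}`. -/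
noncomputable def initAlg (w : Fin n → Γ) (A : Subalgebra k (MvPolynomial (Fin n) k)) :
    Subalgebra k (MvPolynomial (Fin n) k) :=
  Algebra.adjoin k (lform w '' ((A : Set (MvPolynomial (Fin n) k)) \ {0}))

/-- The field of fractions `K^w` of `A^w`, realized as a subfield of the fraction field
of `k[x]`. -/
noncomputable def KW (w : Fin n → Γ) (A : Subalgebra k (MvPolynomial (Fin n) k)) :
    Subfield (FractionRing (MvPolynomial (Fin n) k)) :=
  Subfield.closure
    (algebraMap (MvPolynomial (Fin n) k) (FractionRing (MvPolynomial (Fin n) k)) ''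
      (initAlg w A : Set (MvPolynomial (Fin n) k)))

/-- The field of fractions of a subalgebra `A` of `k[x]`, realized as a subfield of the
fraction field of `k[x]`. -/
noncomputable def fracSub (A : Subalgebra k (MvPolynomial (Fin n) k)) :
    Subfield (FractionRing (MvPolynomial (Fin n) k)) :=
  Subfield.closure
    (algebraMap (MvPolynomial (Fin n) k) (FractionRing (MvPolynomial (Fin n) k)) ''
      (A : Set (MvPolynomial (Fin n) k)))

/-- A polynomial is `w`-homogeneous if all its monomials have the same `w`-degree. -/
def IsWHom (w : Fin n → Γ) (f : MvPolynomial (Fin n) k) : Prop :=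
  ∃ γ : Γ, ∀ d ∈ f.support, (∑ i, d i • w i : Γ) = γ

section AuxLemmas

variable {k : Type*} [Field k] [CharZero k] {n : ℕ}
variable {Γ : Type*} [AddCommGroup Γ] [LinearOrder Γ] [IsOrderedAddMonoid Γ]

private lemma wD_add (w : Fin n → Γ) (a b : Fin n →₀ ℕ) :
    (∑ i, (a + b) i • w i : Γ) = (∑ i, a i • w i) + (∑ i, b i • w i) := by
  rw [← Finset.sum_add_distrib]
  exact Finset.sum_congr rfl fun i _ => by simp [add_smul]

private lemma wdeg_zero (w : Fin n → Γ) : wdeg w (0 : MvPolynomial (Fin n) k) = ⊥ := by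
  simp [wdeg]

private lemma le_wdeg {w : Fin n → Γ} {f : MvPolynomial (Fin n) k} {d : Fin n →₀ ℕ}
    (hd : d ∈ f.support) : ((∑ i, d i • w i : Γ) : WithBot Γ) ≤ wdeg w f :=
  Finset.le_sup (f := fun d => ((∑ i, d i • w i : Γ) : WithBot Γ)) hd

private lemma wdeg_ne_bot (w : Fin n → Γ) {f : MvPolynomial (Fin n) k} (hf : f ≠ 0) :
    wdeg w f ≠ ⊥ := by
  obtain ⟨d, hd⟩ := MvPolynomial.support_nonempty.mpr hf
  intro h
  have h2 := le_wdeg (w := w) hd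
  rw [h, le_bot_iff] at h2
  exact WithBot.coe_ne_bot h2

private lemma coeff_lform (w : Fin n → Γ) (f : MvPolynomial (Fin n) k) (d : Fin n →₀ ℕ) :
    (lform w f).coeff d
      = if ((∑ i, d i • w i : Γ) : WithBot Γ) = wdeg w f then f.coeff d else 0 := by
  classical
  rw [lform]
  rw [MvPolynomial.coeff_sum]
  simp only [MvPolynomial.coeff_monomial]
  rw [Finset.sum_ite_eq']
  by_cases hd : d ∈ f.support
  · simp only [Finset.mem_filter, hd, true_and]
  · simp only [Finset.mem_filter, hd, false_and, if_false]
    rw [MvPolynomial.notMem_support_iff.mp hd, ite_self]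

private lemma mem_support_lform (w : Fin n → Γ) {f : MvPolynomial (Fin n) k} {d : Fin n →₀ ℕ}
    (hd : d ∈ (lform w f).support) :
    d ∈ f.support ∧ ((∑ i, d i • w i : Γ) : WithBot Γ) = wdeg w f := by
  have h := MvPolynomial.mem_support_iff.mp hd
  rw [coeff_lform] at h
  by_cases hc : ((∑ i, d i • w i : Γ) : WithBot Γ) = wdeg w f
  · rw [if_pos hc] at h
    exact ⟨MvPolynomial.mem_support_iff.mpr h, hc⟩
  · rw [if_neg hc] at h
    exact absurd rfl h

private lemma lform_zero (w : Fin n → Γ) : lform w (0 : MvPolynomial (Fin n) k) = 0 := by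
  simp [lform]

private lemma lform_ne_zero (w : Fin n → Γ) {f : MvPolynomial (Fin n) k} (hf : f ≠ 0) :
    lform w f ≠ 0 := by
  obtain ⟨d, hd, hsup⟩ := Finset.exists_mem_eq_sup f.support
    (MvPolynomial.support_nonempty.mpr hf) (fun d => ((∑ i, d i • w i : Γ) : WithBot Γ))
  have hsup' : ((∑ i, d i • w i : Γ) : WithBot Γ) = wdeg w f := hsup.symm
  intro h0
  have := coeff_lform w f d
  rw [h0, if_pos hsup'] at this
  exact MvPolynomial.mem_support_iff.mp hd this.symm

private lemma wdeg_add_le (w : Fin n → Γ) (f g : MvPolynomial (Fin n) k) :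
    wdeg w (f + g) ≤ max (wdeg w f) (wdeg w g) := by
  classical
  apply Finset.sup_le
  intro d hd
  rcases Finset.mem_union.mp (MvPolynomial.support_add hd) with h | h
  · exact le_max_of_le_left (le_wdeg h)
  · exact le_max_of_le_right (le_wdeg h)

private lemma wdeg_mul_le (w : Fin n → Γ) (f g : MvPolynomial (Fin n) k) :
    wdeg w (f * g) ≤ wdeg w f + wdeg w g := by
  classical
  apply Finset.sup_le
  intro d hd
  obtain ⟨a, ha, b, hb, rfl⟩ := Finset.mem_add.mp (MvPolynomial.support_mul f g hd)
  calc ((∑ i, (a + b) i • w i : Γ) : WithBot Γ)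
      = ((∑ i, a i • w i : Γ) : WithBot Γ) + ((∑ i, b i • w i : Γ) : WithBot Γ) := by
        rw [wD_add]; exact WithBot.coe_add _ _
    _ ≤ wdeg w f + wdeg w g := add_le_add (le_wdeg ha) (le_wdeg hb)

private lemma wdeg_C_le (w : Fin n → Γ) (c : k) :
    wdeg w (MvPolynomial.C c : MvPolynomial (Fin n) k) ≤ (0 : WithBot Γ) := by
  apply Finset.sup_le
  intro d hd
  have hd0 : d = 0 := by
    have hcc := MvPolynomial.mem_support_iff.mp hd
    rw [MvPolynomial.coeff_C] at hcc
    by_contra hne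
    rw [if_neg (fun h => hne h.symm)] at hcc
    exact hcc rfl
  subst hd0
  simp

private lemma lform_spec (w : Fin n → Γ) {f H : MvPolynomial (Fin n) k} {γ : WithBot Γ}
    (hH : H ≠ 0)
    (hhom : ∀ d ∈ H.support, ((∑ i, d i • w i : Γ) : WithBot Γ) = γ)
    (hlt : wdeg w (f - H) < γ) :
    wdeg w f = γ ∧ lform w f = H := by
  classical
  have key : ∀ d, ((∑ i, d i • w i : Γ) : WithBot Γ) = γ → f.coeff d = H.coeff d := by
    intro d hd
    by_contra hne
    have hmem : d ∈ (f - H).support := by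
      rw [MvPolynomial.mem_support_iff, MvPolynomial.coeff_sub]
      exact sub_ne_zero.mpr hne
    have : γ ≤ wdeg w (f - H) := hd ▸ le_wdeg hmem
    exact absurd this (not_le.mpr hlt)
  have hle : ∀ d ∈ f.support, ((∑ i, d i • w i : Γ) : WithBot Γ) ≤ γ := by
    intro d hd
    by_cases h : ((∑ i, d i • w i : Γ) : WithBot Γ) = γ
    · exact le_of_eq h
    · have hdH : d ∉ H.support := fun hm => h (hhom d hm)
      have hmem : d ∈ (f - H).support := by
        rw [MvPolynomial.mem_support_iff, MvPolynomial.coeff_sub,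
          MvPolynomial.notMem_support_iff.mp hdH, sub_zero]
        exact MvPolynomial.mem_support_iff.mp hd
      exact (le_wdeg hmem).trans hlt.le
  obtain ⟨d0, hd0⟩ := MvPolynomial.support_nonempty.mpr hH
  have hd0γ := hhom d0 hd0
  have hd0f : d0 ∈ f.support := by
    rw [MvPolynomial.mem_support_iff, key d0 hd0γ]
    exact MvPolynomial.mem_support_iff.mp hd0
  have hdeg : wdeg w f = γ :=
    le_antisymm (Finset.sup_le hle) (hd0γ ▸ le_wdeg hd0f)
  refine ⟨hdeg, ?_⟩
  apply MvPolynomial.ext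
  intro d
  rw [coeff_lform, hdeg]
  by_cases h : ((∑ i, d i • w i : Γ) : WithBot Γ) = γ
  · rw [if_pos h, key d h]
  · rw [if_neg h]
    exact (MvPolynomial.notMem_support_iff.mp (fun hm => h (hhom d hm))).symm

private lemma support_lform_subset (w : Fin n → Γ) (f : MvPolynomial (Fin n) k) :
    (lform w f).support ⊆ f.support := fun _ hd => (mem_support_lform w hd).1

private lemma wdeg_lform_le (w : Fin n → Γ) (f : MvPolynomial (Fin n) k) :
    wdeg w (lform w f) ≤ wdeg w f :=
  Finset.sup_le fun _ hd => le_of_eq (mem_support_lform w hd).2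

private lemma wdeg_sub_lform_lt (w : Fin n → Γ) {f : MvPolynomial (Fin n) k} (hf : f ≠ 0) :
    wdeg w (f - lform w f) < wdeg w f := by
  classical
  have hbot : (⊥ : WithBot Γ) < wdeg w f := (wdeg_ne_bot w hf).bot_lt
  rw [wdeg]
  rw [Finset.sup_lt_iff hbot]
  intro d hd
  have hdf : d ∈ f.support := by
    rcases Finset.mem_union.mp (MvPolynomial.support_sub _ f (lform w f) hd) with h | h
    · exact h
    · exact support_lform_subset w f h
  have hne : ((∑ i, d i • w i : Γ) : WithBot Γ) ≠ wdeg w f := by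
    intro hc
    have := MvPolynomial.mem_support_iff.mp hd
    rw [MvPolynomial.coeff_sub, coeff_lform, if_pos hc, sub_self] at this
    exact this rfl
  exact lt_of_le_of_ne (le_wdeg hdf) hne

private lemma wdeg_lform_mul (w : Fin n → Γ) {f g : MvPolynomial (Fin n) k}
    (hf : f ≠ 0) (hg : g ≠ 0) :
    wdeg w (f * g) = wdeg w f + wdeg w g ∧ lform w (f * g) = lform w f * lform w g := by
  classical
  apply lform_spec w (mul_ne_zero (lform_ne_zero w hf) (lform_ne_zero w hg))
  · intro d hd
    obtain ⟨a, ha, b, hb, rfl⟩ := Finset.mem_add.mp (MvPolynomial.support_mul _ _ hd)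
    rw [wD_add, WithBot.coe_add, (mem_support_lform w ha).2, (mem_support_lform w hb).2]
  · have heq : f * g - lform w f * lform w g
        = (f - lform w f) * g + lform w f * (g - lform w g) := by ring
    rw [heq]
    have h1 : wdeg w ((f - lform w f) * g) < wdeg w f + wdeg w g :=
      (wdeg_mul_le w _ _).trans_lt
        (WithBot.add_lt_add_right (wdeg_ne_bot w hg) (wdeg_sub_lform_lt w hf))
    have h2 : wdeg w (lform w f * (g - lform w g)) < wdeg w f + wdeg w g := by
      refine (wdeg_mul_le w _ _).trans_lt ?_
      calc wdeg w (lform w f) + wdeg w (g - lform w g)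
          ≤ wdeg w f + wdeg w (g - lform w g) := add_le_add_left (wdeg_lform_le w f) _
        _ < wdeg w f + wdeg w g :=
          WithBot.add_lt_add_left (wdeg_ne_bot w hf) (wdeg_sub_lform_lt w hg)
    exact (wdeg_add_le w _ _).trans_lt (max_lt h1 h2)

private lemma wdeg_one_lform_one (w : Fin n → Γ) :
    wdeg w (1 : MvPolynomial (Fin n) k) = ((0 : Γ) : WithBot Γ)
      ∧ lform w (1 : MvPolynomial (Fin n) k) = 1 := by
  apply lform_spec w one_ne_zero
  · intro d hd
    have hd0 : d = 0 := by
      have := MvPolynomial.mem_support_iff.mp hd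
      rw [MvPolynomial.coeff_one] at this
      by_contra hne
      exact this (if_neg (fun h => hne h.symm))
    subst hd0
    simp
  · rw [sub_self, wdeg_zero]
    exact WithBot.bot_lt_coe _

private lemma lform_pow (w : Fin n → Γ) {f : MvPolynomial (Fin n) k} (hf : f ≠ 0)
    {δ : Γ} (hδ : wdeg w f = (δ : WithBot Γ)) (m : ℕ) :
    f ^ m ≠ 0 ∧ wdeg w (f ^ m) = ((m • δ : Γ) : WithBot Γ)
      ∧ lform w (f ^ m) = lform w f ^ m := by
  induction m with
  | zero =>
    refine ⟨by simp, ?_, by simpa using (wdeg_one_lform_one w).2⟩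
    simpa using (wdeg_one_lform_one w).1
  | succ m ih =>
    obtain ⟨h1, h2, h3⟩ := ih
    obtain ⟨hd, hl⟩ := wdeg_lform_mul w h1 hf
    refine ⟨mul_ne_zero h1 hf, ?_, ?_⟩
    · rw [pow_succ, hd, h2, hδ, succ_nsmul, WithBot.coe_add]
    · rw [pow_succ, hl, h3, pow_succ]

private lemma lform_prod (w : Fin n → Γ) {r : ℕ} (g : Fin r → MvPolynomial (Fin n) k)
    (δ : Fin r → Γ) (hg : ∀ i, g i ≠ 0) (hδ : ∀ i, wdeg w (g i) = (δ i : WithBot Γ))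
    (a : Fin r →₀ ℕ) (s : Finset (Fin r)) :
    (∏ i ∈ s, g i ^ a i) ≠ 0 ∧
    wdeg w (∏ i ∈ s, g i ^ a i) = ((∑ i ∈ s, a i • δ i : Γ) : WithBot Γ) ∧
    lform w (∏ i ∈ s, g i ^ a i) = ∏ i ∈ s, lform w (g i) ^ a i := by
  classical
  induction s using Finset.induction with
  | empty =>
    refine ⟨by simp, ?_, by simpa using (wdeg_one_lform_one w).2⟩
    simpa using (wdeg_one_lform_one w).1
  | @insert x s hx ih =>
    obtain ⟨h1, h2, h3⟩ := ih
    obtain ⟨p1, p2, p3⟩ := lform_pow w (hg x) (hδ x) (a x)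
    rw [Finset.prod_insert hx, Finset.prod_insert hx, Finset.sum_insert hx]
    obtain ⟨hd, hl⟩ := wdeg_lform_mul w p1 h1
    exact ⟨mul_ne_zero p1 h1, by rw [hd, p2, h2, WithBot.coe_add],
      by rw [hl, p3, h3]⟩

private lemma wdeg_sum_lt (w : Fin n → Γ) {α : Type*} {s : Finset α}
    {F : α → MvPolynomial (Fin n) k} {γ : WithBot Γ}
    (hbot : (⊥ : WithBot Γ) < γ) (hF : ∀ a ∈ s, wdeg w (F a) < γ) :
    wdeg w (∑ a ∈ s, F a) < γ := by
  classical
  induction s using Finset.induction with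
  | empty => simpa [wdeg_zero] using hbot
  | @insert x s hx ih =>
    rw [Finset.sum_insert hx]
    exact (wdeg_add_le w _ _).trans_lt
      (max_lt (hF x (Finset.mem_insert_self x s))
        (ih fun a ha => hF a (Finset.mem_insert_of_mem ha)))

end AuxLemmas

/-- If `g_1^w, …, g_r^w` are algebraically independent over `k`, then
`k[g_1,…,g_r]^w = k[g_1^w,…,g_r^w]`. -/
theorem stmt14 (r : ℕ) (g : Fin r → MvPolynomial (Fin n) k) (w : Fin n → Γ)
    (hind : AlgebraicIndependent k fun i => lform w (g i)) :
    initAlg w (Algebra.adjoin k (Set.range g))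
      = Algebra.adjoin k (Set.range fun i => lform w (g i)) := by
  classical
  have hinj : Function.Injective (MvPolynomial.aeval (R := k) fun i => lform w (g i)) := hind
  set h : Fin r → MvPolynomial (Fin n) k := fun i => lform w (g i) with hh
  have hh0 : ∀ i, h i ≠ 0 := hind.ne_zero
  have hg0 : ∀ i, g i ≠ 0 := by
    intro i hgi
    exact hh0 i (by simp only [hh, hgi, lform_zero])
  choose δ hδ using fun i => WithBot.ne_bot_iff_exists.mp (wdeg_ne_bot w (hg0 i))
  -- hδ : ∀ i, (δ i : WithBot Γ) = wdeg w (g i)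
  have key : ∀ P : MvPolynomial (Fin r) k, P ≠ 0 →
      lform w (MvPolynomial.aeval g P) = MvPolynomial.aeval h (lform δ P) := by
    intro P hP
    have hQ : lform δ P ≠ 0 := lform_ne_zero δ hP
    have hH0 : MvPolynomial.aeval h (lform δ P) ≠ 0 := fun h0 => hQ (hinj (by rw [h0, map_zero]))
    refine (lform_spec w (γ := wdeg δ P) hH0 ?_ ?_).2
    · -- homogeneity of aeval h (lform δ P)
      intro d hd
      rw [MvPolynomial.aeval_def, MvPolynomial.eval₂_eq'] at hd
      obtain ⟨a, haQ, hda⟩ := Finset.mem_biUnion.mp (MvPolynomial.support_sum hd)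
      have hda' : d ∈ (∏ i, h i ^ a i).support := by
        refine MvPolynomial.support_smul (a := (lform δ P).coeff a) ?_
        rwa [MvPolynomial.smul_eq_C_mul, ← MvPolynomial.algebraMap_eq]
      obtain ⟨-, hwd, hlf⟩ := lform_prod w g δ hg0 (fun i => (hδ i).symm) a Finset.univ
      rw [← hlf] at hda'
      have h1 := (mem_support_lform w hda').2
      rw [hwd] at h1
      have h2 := (mem_support_lform δ haQ).2
      rw [h1]
      exact h2
    · -- the remainder has smaller degree
      have hbot : (⊥ : WithBot Γ) < wdeg δ P := (wdeg_ne_bot δ hP).bot_lt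
      rw [MvPolynomial.aeval_def, MvPolynomial.aeval_def, MvPolynomial.eval₂_eq',
        MvPolynomial.eval₂_eq']
      have hHsum : (∑ a ∈ (lform δ P).support,
            algebraMap k (MvPolynomial (Fin n) k) ((lform δ P).coeff a) * ∏ i, h i ^ a i)
          = ∑ a ∈ P.support,
            algebraMap k (MvPolynomial (Fin n) k) ((lform δ P).coeff a) * ∏ i, h i ^ a i :=
        Finset.sum_subset (support_lform_subset δ P)
          (fun a _ ha => by
            rw [MvPolynomial.notMem_support_iff.mp ha, map_zero, zero_mul])
      rw [hHsum, ← Finset.sum_sub_distrib]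
      apply wdeg_sum_lt w hbot
      intro a haP
      obtain ⟨hGne, hwd, hlf⟩ := lform_prod w g δ hg0 (fun i => (hδ i).symm) a Finset.univ
      by_cases hc : ((∑ i, a i • δ i : Γ) : WithBot Γ) = wdeg δ P
      · have hcoe : (lform δ P).coeff a = P.coeff a := by
          rw [coeff_lform, if_pos hc]
        rw [hcoe, MvPolynomial.algebraMap_eq, ← mul_sub]
        calc wdeg w (MvPolynomial.C (P.coeff a) * ((∏ i, g i ^ a i) - ∏ i, h i ^ a i))
            ≤ wdeg w (MvPolynomial.C (P.coeff a) : MvPolynomial (Fin n) k)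
              + wdeg w ((∏ i, g i ^ a i) - ∏ i, h i ^ a i) := wdeg_mul_le w _ _
          _ ≤ 0 + wdeg w ((∏ i, g i ^ a i) - ∏ i, h i ^ a i) :=
              add_le_add_left (wdeg_C_le w _) _
          _ = wdeg w ((∏ i, g i ^ a i) - ∏ i, h i ^ a i) := zero_add _
          _ < wdeg w (∏ i, g i ^ a i) := by
              rw [← hlf]; exact wdeg_sub_lform_lt w hGne
          _ = wdeg δ P := by rw [hwd, hc]
      · have hcoe : (lform δ P).coeff a = 0 := by
          rw [coeff_lform, if_neg hc]
        rw [hcoe, map_zero, zero_mul, sub_zero, MvPolynomial.algebraMap_eq]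
        calc wdeg w (MvPolynomial.C (P.coeff a) * ∏ i, g i ^ a i)
            ≤ wdeg w (MvPolynomial.C (P.coeff a) : MvPolynomial (Fin n) k)
              + wdeg w (∏ i, g i ^ a i) := wdeg_mul_le w _ _
          _ ≤ 0 + wdeg w (∏ i, g i ^ a i) := add_le_add_left (wdeg_C_le w _) _
          _ = wdeg w (∏ i, g i ^ a i) := zero_add _
          _ < wdeg δ P := by
              rw [hwd]
              exact lt_of_le_of_ne (le_wdeg haP) hc
  apply le_antisymm
  · rw [initAlg]
    apply Algebra.adjoin_le
    rintro _ ⟨f, ⟨hfA, hf0⟩, rfl⟩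
    rw [Algebra.adjoin_range_eq_range_aeval] at hfA
    obtain ⟨P, hPf⟩ := hfA
    have hf0' : f ≠ 0 := hf0
    have hP : P ≠ 0 := by
      rintro rfl
      rw [map_zero] at hPf
      exact hf0' hPf.symm
    have : lform w f = MvPolynomial.aeval h (lform δ P) := by
      rw [← hPf]
      exact key P hP
    rw [this, Algebra.adjoin_range_eq_range_aeval]
    exact ⟨lform δ P, rfl⟩
  · apply Algebra.adjoin_le
    rintro _ ⟨i, rfl⟩
    rw [initAlg]
    exact Algebra.subset_adjoin
      ⟨g i, ⟨Algebra.subset_adjoin ⟨i, rfl⟩, hg0 i⟩, rfl⟩
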